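/- Let ℋ be a complex Hilbert space, X = 𝓑(ℋ), Y a complex Banach space, U : X → Y a bounded linear operator with ‖U‖ ≤ λ, and 1 ≤ p < ∞. Then for every bounded simply connected complete Reinhardt domain Ω ⊆ ℂⁿ one has R_λ(Ω, p, U) ≥ R_λ(𝔻ⁿ, p, U), where 𝔻ⁿ is the open unit polydisc in ℂⁿ. -/

import Mathlib

open scoped BigOperators ENNReal ComplexConjugate Pointwise

noncomputable section

open Classical in
/-- The `ℓ^q` norm on `ℂⁿ`, for `q ∈ [1,∞]` (`q = ∞` giving the sup norm). -/
def lqNorm (n : ℕ) (q : ℝ≥0∞) (z : Fin n → ℂ) : ℝ :=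
  if q = ∞ then ⨆ i, ‖z i‖ else (∑ i, ‖z i‖ ^ q.toReal) ^ (1 / q.toReal)

/-- The open unit ball of `ℓ^q_n`. -/
def lqBall (n : ℕ) (q : ℝ≥0∞) : Set (Fin n → ℂ) := {z | lqNorm n q z < 1}

/-- The `ℓ^p` norm on `ℂⁿ` with a real exponent `p ∈ [1,∞)`. -/
def lpNormR (n : ℕ) (p : ℝ) (z : Fin n → ℂ) : ℝ := (∑ i, ‖z i‖ ^ p) ^ (1 / p)

/-- A norm on `ℂⁿ` for which the canonical basis vectors form a normalized
1-unconditional basis.  Its open unit ball is a bounded convex complete Reinhardt domain. -/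
structure ReinhardtNorm (n : ℕ) where
  N : (Fin n → ℂ) → ℝ
  add_le : ∀ z w, N (z + w) ≤ N z + N w
  smul_eq : ∀ (c : ℂ) (z), N (c • z) = ‖c‖ * N z
  eq_zero : ∀ z, N z = 0 → z = 0
  mono : ∀ z w : Fin n → ℂ, (∀ i, ‖z i‖ ≤ ‖w i‖) → N z ≤ N w
  normalized : ∀ i, N (Pi.single i 1) = 1

/-- The open unit ball `B_Z`. -/
def ReinhardtNorm.ball {n : ℕ} (Z : ReinhardtNorm n) : Set (Fin n → ℂ) := {z | Z.N z < 1}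

/-- `‖f‖_{Ω,X} = sup_{z ∈ Ω} ‖f z‖`. -/
def supNormOn {n : ℕ} {X : Type*} [Norm X] (Ω : Set (Fin n → ℂ)) (f : (Fin n → ℂ) → X) : ℝ :=
  sSup ((fun z => ‖f z‖) '' Ω)

/-- A complete Reinhardt domain in `ℂⁿ`. -/
def IsCompleteReinhardt {n : ℕ} (Ω : Set (Fin n → ℂ)) : Prop :=
  IsOpen Ω ∧ IsConnected Ω ∧ (0 : Fin n → ℂ) ∈ Ω ∧
    ∀ z ∈ Ω, ∀ w : Fin n → ℂ, (∀ j, ‖w j‖ ≤ ‖z j‖) → w ∈ Ω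

/-- `S(Ω₁,Ω₂) = inf {s > 0 : Ω₁ ⊆ s Ω₂}`. -/
def domRatio {n : ℕ} (Ω₁ Ω₂ : Set (Fin n → ℂ)) : ℝ :=
  sInf {s : ℝ | 0 < s ∧ Ω₁ ⊆ s • Ω₂}

/-- The operator norm of the identity of `ℂⁿ` from the norm `N₁` to the norm `N₂`. -/
def idNorm {n : ℕ} (N₁ N₂ : (Fin n → ℂ) → ℝ) : ℝ := sSup (N₂ '' {z | N₁ z ≤ 1})

/-- The dual norm `‖∑ e_k*‖` of the sum of the coordinate functionals. -/
def dualSumNorm {n : ℕ} (N : (Fin n → ℂ) → ℝ) : ℝ :=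
  sSup ((fun z => ‖∑ i, z i‖) '' {z | N z ≤ 1})

section PH

variable {H : Type*} [NormedAddCommGroup H] [InnerProductSpace ℂ H] [CompleteSpace H]
variable {Y : Type*} [NormedAddCommGroup Y] [NormedSpace ℂ Y]

/-- `f` is a pluriharmonic function on `Ω` with values in `𝓑(ℋ)`, with coefficient
families `a`, `b` : `f z = ∑ a_α z^α + ∑ b_α* conj(z)^α`, `b₀ = 0`. -/
def IsPHRep {n : ℕ} (Ω : Set (Fin n → ℂ)) (f : (Fin n → ℂ) → H →L[ℂ] H)
    (a b : (Fin n → ℕ) → H →L[ℂ] H) : Prop :=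
  ContinuousOn f Ω ∧ b 0 = 0 ∧
    ∀ z ∈ Ω, HasSum (fun α : Fin n → ℕ =>
      (∏ i, z i ^ α i) • a α + (∏ i, conj (z i) ^ α i) • star (b α)) (f z)

/-- The `λ`-powered Bohr radius `R_λ(Ω, p, U)` for `𝓑(ℋ)`-valued pluriharmonic functions. -/
def bohrR {n : ℕ} (Ω : Set (Fin n → ℂ)) (p lam : ℝ) (U : (H →L[ℂ] H) →L[ℂ] Y) : ℝ :=
  sSup {r : ℝ | 0 ≤ r ∧
    ∀ (f : (Fin n → ℂ) → H →L[ℂ] H) (a b : (Fin n → ℕ) → H →L[ℂ] H),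
      IsPHRep Ω f a b → BddAbove ((fun z => ‖f z‖) '' Ω) →
      ∀ z ∈ Ω, ∀ F : Finset (Fin n → ℕ),
        ∑ α ∈ F, (‖U (a α)‖ ^ p + ‖U (b α)‖ ^ p) * ‖∏ i, (r • z) i ^ α i‖ ^ p
          ≤ lam ^ p * supNormOn Ω f ^ p}

/-- The `m`-homogeneous pluriharmonic polynomial with coefficients `a`, `b`. -/
def homPH {n : ℕ} (a b : (Fin n → ℕ) → H →L[ℂ] H) (z : Fin n → ℂ) : H →L[ℂ] H :=
  ∑' α : Fin n → ℕ, ((∏ i, z i ^ α i) • a α + (∏ i, conj (z i) ^ α i) • star (b α))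

/-- The homogeneous Bohr radius `R^m_μ(Ω, p, U)` for `m`-homogeneous pluriharmonic
polynomials. -/
def bohrRHom {n : ℕ} (m : ℕ) (Ω : Set (Fin n → ℂ)) (p mu : ℝ)
    (U : (H →L[ℂ] H) →L[ℂ] Y) : ℝ :=
  sSup {r : ℝ | 0 ≤ r ∧
    ∀ a b : (Fin n → ℕ) → H →L[ℂ] H,
      (∀ α, (∑ i, α i) ≠ m → a α = 0) → (∀ α, (∑ i, α i) ≠ m → b α = 0) →
      ∀ z ∈ Ω, ∀ F : Finset (Fin n → ℕ),
        ∑ α ∈ F, (‖U (a α)‖ ^ p + ‖U (b α)‖ ^ p) * ‖∏ i, (r • z) i ^ α i‖ ^ p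
          ≤ mu ^ p * supNormOn Ω (homPH a b) ^ p}

end PH

section Hol

variable {X : Type*} [NormedAddCommGroup X] [NormedSpace ℂ X]
variable {Y : Type*} [NormedAddCommGroup Y] [NormedSpace ℂ Y]

/-- `f` is a holomorphic function on `Ω` with monomial coefficient family `a`. -/
def IsHolRep {n : ℕ} (Ω : Set (Fin n → ℂ)) (f : (Fin n → ℂ) → X)
    (a : (Fin n → ℕ) → X) : Prop :=
  ∀ z ∈ Ω, HasSum (fun α : Fin n → ℕ => (∏ i, z i ^ α i) • a α) (f z)

/-- The `λ`-powered Bohr radius `K_λ(Ω, p, U)` for `X`-valued holomorphic functions. -/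
def bohrK {n : ℕ} (Ω : Set (Fin n → ℂ)) (p lam : ℝ) (U : X →L[ℂ] Y) : ℝ :=
  sSup {r : ℝ | 0 ≤ r ∧
    ∀ (f : (Fin n → ℂ) → X) (a : (Fin n → ℕ) → X),
      IsHolRep Ω f a → BddAbove ((fun z => ‖f z‖) '' Ω) →
      ∀ z ∈ Ω, ∀ F : Finset (Fin n → ℕ),
        ∑ α ∈ F, ‖U (a α)‖ ^ p * ‖∏ i, (r • z) i ^ α i‖ ^ p
          ≤ lam ^ p * supNormOn Ω f ^ p}

/-- The `m`-homogeneous holomorphic polynomial with coefficients `a`. -/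
def homHol {n : ℕ} (a : (Fin n → ℕ) → X) (z : Fin n → ℂ) : X :=
  ∑' α : Fin n → ℕ, (∏ i, z i ^ α i) • a α

/-- The homogeneous Bohr radius `K^m_μ(Ω, p, U)` for `m`-homogeneous holomorphic
polynomials. -/
def bohrKHom {n : ℕ} (m : ℕ) (Ω : Set (Fin n → ℂ)) (p mu : ℝ) (U : X →L[ℂ] Y) : ℝ :=
  sSup {r : ℝ | 0 ≤ r ∧
    ∀ a : (Fin n → ℕ) → X, (∀ α, (∑ i, α i) ≠ m → a α = 0) →
      ∀ z ∈ Ω, ∀ F : Finset (Fin n → ℕ),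
        ∑ α ∈ F, ‖U (a α)‖ ^ p * ‖∏ i, (r • z) i ^ α i‖ ^ p
          ≤ mu ^ p * supNormOn Ω (homHol a) ^ p}

end Hol

/-- `W` has cotype `t`: via the equivalent averaged-signs formulation of the
Rademacher average. -/
def HasCotype (W : Type*) [NormedAddCommGroup W] (t : ℝ) : Prop :=
  ∃ C : ℝ, 0 < C ∧ ∀ (k : ℕ) (w : Fin k → W),
    (∑ j, ‖w j‖ ^ t) ^ (1 / t) ≤
      C * ((∑ ε : Fin k → Bool, ‖∑ j, if ε j then w j else -w j‖ ^ (2 : ℝ)) / 2 ^ k)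
        ^ ((1 : ℝ) / 2)

/-- `Cot(W) = inf {2 ≤ t < ∞ : W has cotype t}`, equal to `∞` if `W` has no finite
cotype. -/
def cotype (W : Type*) [NormedAddCommGroup W] : ℝ≥0∞ :=
  sInf {t : ℝ≥0∞ | ∃ s : ℝ, t = ENNReal.ofReal s ∧ 2 ≤ s ∧ HasCotype W s}

open Classical in
/-- The lower-bound quantity `Ψ₁(n,λ,p,q)` of the infinite-dimensional theorem,
with constants `E₅`, `E₆`, cotype `cot = Cot(X)` and a finite cotype `t` of `X`. -/
def Psi1 (E₅ E₆ : ℝ) (cot : ℝ≥0∞) (t : ℝ) (n : ℕ) (lam p : ℝ) (q : ℝ≥0∞) : ℝ :=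
  if min cot q < ENNReal.ofReal p then E₅ * ((lam ^ p - 1) ^ (1 / p) / lam)
  else E₆ * ((lam ^ p - 1) ^ (1 / p) / lam) *
    (n : ℝ) ^ (1 / (min (ENNReal.ofReal t) q).toReal - 1 / p)

open Classical in
/-- The upper-bound quantity `Ψ₂(n,λ,p,q)` of the infinite-dimensional theorem. -/
def Psi2 (cot : ℝ≥0∞) (n : ℕ) (lam p : ℝ) (q : ℝ≥0∞) : ℝ :=
  if q ≤ cot then 2 * lam * (n : ℝ) ^ (1 / q.toReal - 1 / p)
  else 2 * lam * (n : ℝ) ^ (cot⁻¹.toReal - 1 / p)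

/-- A Banach sequence space (`ℓ₁ ⊆ Z ⊆ c₀` with the canonical vectors a normalized
1-unconditional basis), recorded through the induced norms on the finite sections
`Z_n = span{e₁,…,e_n}`. -/
structure BanachSeqNorm where
  N : ∀ n : ℕ, (Fin n → ℂ) → ℝ
  compat : ∀ (n : ℕ) (z : Fin n → ℂ), N (n + 1) (Fin.snoc z 0) = N n z
  add_le : ∀ (n : ℕ) (z w : Fin n → ℂ), N n (z + w) ≤ N n z + N n w
  smul_eq : ∀ (n : ℕ) (c : ℂ) (z : Fin n → ℂ), N n (c • z) = ‖c‖ * N n z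
  eq_zero : ∀ (n : ℕ) (z : Fin n → ℂ), N n z = 0 → z = 0
  mono : ∀ (n : ℕ) (z w : Fin n → ℂ), (∀ i, ‖z i‖ ≤ ‖w i‖) → N n z ≤ N n w
  normalized : ∀ (n : ℕ) (i : Fin n), N n (Pi.single i 1) = 1

/-- The open unit ball `B_{Z_n}`. -/
def BanachSeqNorm.ball (S : BanachSeqNorm) (n : ℕ) : Set (Fin n → ℂ) := {z | S.N n z < 1}

/-- `Z` is symmetric: the norm is invariant under permutations of the coordinates. -/
def BanachSeqNorm.Symm (S : BanachSeqNorm) : Prop :=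
  ∀ (n : ℕ) (σ : Equiv.Perm (Fin n)) (z : Fin n → ℂ), S.N n (z ∘ σ) = S.N n z

/-- `Z` is 2-convex. -/
def BanachSeqNorm.TwoConvex (S : BanachSeqNorm) : Prop :=
  ∃ C : ℝ, 0 < C ∧ ∀ (n m : ℕ) (x : Fin m → Fin n → ℂ),
    S.N n (fun i => (Real.sqrt (∑ k, ‖x k i‖ ^ 2) : ℂ)) ≤
      C * Real.sqrt (∑ k, S.N n (x k) ^ 2)

open Classical in
/-- The exponent `(p-1)/(p(q-1))`, interpreted as `0` when `q = ∞`. -/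
def qexp1 (p : ℝ) (q : ℝ≥0∞) : ℝ :=
  if q = ∞ then 0 else (p - 1) / (p * (q.toReal - 1))

open Classical in
/-- The exponent `(q-p)/(p(q-1))`, interpreted as `1/p` when `q = ∞`. -/
def qexp2 (p : ℝ) (q : ℝ≥0∞) : ℝ :=
  if q = ∞ then 1 / p else (q.toReal - p) / (p * (q.toReal - 1))

/-- The mixed Minkowski norm of `ℓ^m_s(ℓ^n_t)` on `ℂ^{mn}`. -/
def mixedNorm (m n : ℕ) (s t : ℝ≥0∞) (z : Fin (m * n) → ℂ) : ℝ :=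
  lqNorm m s (fun k => lqNorm n t (fun j => z (finProdFinEquiv (k, j))))

/-- The open unit ball of the mixed Minkowski space `ℓ^m_s(ℓ^n_t)`. -/
def mixedBall (m n : ℕ) (s t : ℝ≥0∞) : Set (Fin (m * n) → ℂ) :=
  {z | mixedNorm m n s t z < 1}

end

section Helpers

private lemma lqNorm_top {n : ℕ} (z : Fin n → ℂ) : lqNorm n ∞ z = ⨆ i, ‖z i‖ := by
  rw [lqNorm, if_pos rfl]

variable {H : Type*} [NormedAddCommGroup H] [InnerProductSpace ℂ H] [CompleteSpace H]
variable {Y : Type*} [NormedAddCommGroup Y] [NormedSpace ℂ Y]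

private lemma bohr_summand_eq {n : ℕ} (a b : H →L[ℂ] H) (c w : Fin n → ℂ) (α : Fin n → ℕ) :
    (∏ i, w i ^ α i) • ((∏ i, c i ^ α i) • a) +
      (∏ i, conj (w i) ^ α i) • star ((∏ i, c i ^ α i) • b)
    = (∏ i, (c i * w i) ^ α i) • a + (∏ i, conj (c i * w i) ^ α i) • star b := by
  simp only [star_smul, smul_smul, Complex.star_def, map_mul, map_prod, map_pow,
    mul_pow, Finset.prod_mul_distrib]
  congr 2 <;> ring

private lemma bohr_term_eq (U : (H →L[ℂ] H) →L[ℂ] Y) {p : ℝ} (hp0 : 0 ≤ p)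
    {n : ℕ} (a b : H →L[ℂ] H) (c v : Fin n → ℂ) (α : Fin n → ℕ) :
    (‖U ((∏ i, c i ^ α i) • a)‖ ^ p + ‖U ((∏ i, c i ^ α i) • b)‖ ^ p) *
        ‖∏ i, v i ^ α i‖ ^ p
    = (‖U a‖ ^ p + ‖U b‖ ^ p) * ‖∏ i, (c i * v i) ^ α i‖ ^ p := by
  have hK : ∀ x : H →L[ℂ] H, ‖U ((∏ i, c i ^ α i) • x)‖ = ‖(∏ i, c i ^ α i)‖ * ‖U x‖ := by
    intro x; rw [map_smul, norm_smul]
  rw [hK, hK]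
  have hprod : (∏ i, (c i * v i) ^ α i) = (∏ i, c i ^ α i) * (∏ i, v i ^ α i) := by
    simp [mul_pow, Finset.prod_mul_distrib]
  rw [hprod, norm_mul, Real.mul_rpow (norm_nonneg _) (norm_nonneg _),
    Real.mul_rpow (norm_nonneg _) (norm_nonneg _),
    Real.mul_rpow (norm_nonneg _) (norm_nonneg _)]
  ring

private lemma supNormOn_nonneg {n : ℕ} {X : Type*} [NormedAddCommGroup X]
    (Ω : Set (Fin n → ℂ)) (f : (Fin n → ℂ) → X) : 0 ≤ supNormOn Ω f :=
  Real.sSup_nonneg fun x hx => by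
    obtain ⟨z, _, rfl⟩ := hx; exact norm_nonneg _

private lemma bohr_transfer (U : (H →L[ℂ] H) →L[ℂ] Y) (p lam : ℝ) (hp : 1 ≤ p)
    (hlam : 0 ≤ lam) {n : ℕ} (Ω₁ Ω₂ : Set (Fin n → ℂ)) (c : Fin n → ℂ)
    (hc : ∀ w ∈ Ω₂, (fun i => c i * w i) ∈ Ω₁) {r : ℝ}
    (hr : ∀ (f : (Fin n → ℂ) → H →L[ℂ] H) (a b : (Fin n → ℕ) → H →L[ℂ] H),
      IsPHRep Ω₂ f a b → BddAbove ((fun z => ‖f z‖) '' Ω₂) →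
      ∀ z ∈ Ω₂, ∀ F : Finset (Fin n → ℕ),
        ∑ α ∈ F, (‖U (a α)‖ ^ p + ‖U (b α)‖ ^ p) * ‖∏ i, (r • z) i ^ α i‖ ^ p
          ≤ lam ^ p * supNormOn Ω₂ f ^ p)
    (f : (Fin n → ℂ) → H →L[ℂ] H) (a b : (Fin n → ℕ) → H →L[ℂ] H)
    (hf : IsPHRep Ω₁ f a b) (hbdd : BddAbove ((fun z => ‖f z‖) '' Ω₁)) :
    ∀ w ∈ Ω₂, ∀ F : Finset (Fin n → ℕ),
      ∑ α ∈ F, (‖U (a α)‖ ^ p + ‖U (b α)‖ ^ p) * ‖∏ i, (c i * (r • w) i) ^ α i‖ ^ p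
        ≤ lam ^ p * supNormOn Ω₁ f ^ p := by
  intro w hw F
  set g : (Fin n → ℂ) → H →L[ℂ] H := fun w => f (fun i => c i * w i) with hg
  set a' : (Fin n → ℕ) → H →L[ℂ] H := fun α => (∏ i, c i ^ α i) • a α with ha'
  set b' : (Fin n → ℕ) → H →L[ℂ] H := fun α => (∏ i, c i ^ α i) • b α with hb'
  have hmaps : Set.MapsTo (fun w : Fin n → ℂ => (fun i => c i * w i)) Ω₂ Ω₁ := hc
  have hrep' : IsPHRep Ω₂ g a' b' := by
    refine ⟨hf.1.comp (Continuous.continuousOn ?_) hmaps, ?_, ?_⟩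
    · exact continuous_pi fun i => continuous_const.mul (continuous_apply i)
    · simp [hb', hf.2.1]
    · intro v hv
      have hs := hf.2.2 _ (hc v hv)
      have heq : (fun α : Fin n → ℕ =>
          (∏ i, v i ^ α i) • a' α + (∏ i, conj (v i) ^ α i) • star (b' α))
          = fun α : Fin n → ℕ =>
          (∏ i, (c i * v i) ^ α i) • a α + (∏ i, conj (c i * v i) ^ α i) • star (b α) := by
        funext α; exact bohr_summand_eq (a α) (b α) c v α
      rw [heq]; exact hs
  have hgle : ∀ v ∈ Ω₂, ‖g v‖ ≤ supNormOn Ω₁ f := by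
    intro v hv
    exact le_csSup hbdd ⟨_, hc v hv, rfl⟩
  have hbdd' : BddAbove ((fun z => ‖g z‖) '' Ω₂) := by
    refine ⟨supNormOn Ω₁ f, ?_⟩
    rintro x ⟨v, hv, rfl⟩; exact hgle v hv
  have hsup : supNormOn Ω₂ g ≤ supNormOn Ω₁ f := by
    refine Real.sSup_le ?_ (supNormOn_nonneg _ _)
    rintro x ⟨v, hv, rfl⟩; exact hgle v hv
  have hmain := hr g a' b' hrep' hbdd' w hw F
  have hsum : ∑ α ∈ F, (‖U (a α)‖ ^ p + ‖U (b α)‖ ^ p) * ‖∏ i, (c i * (r • w) i) ^ α i‖ ^ p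
      = ∑ α ∈ F, (‖U (a' α)‖ ^ p + ‖U (b' α)‖ ^ p) * ‖∏ i, (r • w) i ^ α i‖ ^ p := by
    refine Finset.sum_congr rfl fun α _ => ?_
    exact (bohr_term_eq U (le_trans zero_le_one hp) (a α) (b α) c (r • w) α).symm
  rw [hsum]
  refine hmain.trans ?_
  have h0p : (0:ℝ) ≤ p := le_trans zero_le_one hp
  exact mul_le_mul_of_nonneg_left
    (Real.rpow_le_rpow (supNormOn_nonneg _ _) hsup h0p)
    (Real.rpow_nonneg hlam p)

private lemma bohr_zero_mem (U : (H →L[ℂ] H) →L[ℂ] Y) (p lam : ℝ) (hp : 1 ≤ p)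
    (hU : ‖U‖ ≤ lam) {n : ℕ} (Ω : Set (Fin n → ℂ)) (h0 : (0 : Fin n → ℂ) ∈ Ω)
    (f : (Fin n → ℂ) → H →L[ℂ] H) (a b : (Fin n → ℕ) → H →L[ℂ] H)
    (hrep : IsPHRep Ω f a b) (hbdd : BddAbove ((fun z => ‖f z‖) '' Ω))
    (z : Fin n → ℂ) (hz : z ∈ Ω) (F : Finset (Fin n → ℕ)) :
    ∑ α ∈ F, (‖U (a α)‖ ^ p + ‖U (b α)‖ ^ p) * ‖∏ i, ((0:ℝ) • z) i ^ α i‖ ^ p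
      ≤ lam ^ p * supNormOn Ω f ^ p := by
  have hlam : 0 ≤ lam := le_trans (norm_nonneg U) hU
  have hp0 : (0:ℝ) < p := lt_of_lt_of_le one_pos hp
  have hprod : ∀ α : Fin n → ℕ, (∏ i, ((0:ℝ) • z) i ^ α i)
      = if α = 0 then (1:ℂ) else 0 := by
    intro α
    by_cases hα : α = 0
    · subst hα; simp
    · have : ∃ i, α i ≠ 0 := by
        by_contra hno; push_neg at hno; exact hα (funext hno)
      obtain ⟨i, hi⟩ := this
      rw [if_neg hα]
      exact Finset.prod_eq_zero (Finset.mem_univ i) (by simp [zero_pow hi])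
  -- f 0 = a 0
  have hsum0 := hrep.2.2 0 h0
  have heq0 : (fun α : Fin n → ℕ =>
      (∏ i, (0:ℂ) ^ α i) • a α + (∏ i, conj ((0:Fin n → ℂ) i) ^ α i) • star (b α))
      = fun α : Fin n → ℕ => if α = 0 then a 0 + star (b 0) else 0 := by
    funext α
    by_cases hα : α = 0
    · subst hα; simp
    · have : ∃ i, α i ≠ 0 := by
        by_contra hno; push_neg at hno; exact hα (funext hno)
      obtain ⟨i, hi⟩ := this
      have h1 : (∏ i, (0:ℂ) ^ α i) = 0 :=
        Finset.prod_eq_zero (Finset.mem_univ i) (by simp [zero_pow hi])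
      have h2 : (∏ i, conj ((0:Fin n → ℂ) i) ^ α i) = 0 :=
        Finset.prod_eq_zero (Finset.mem_univ i) (by simp [zero_pow hi])
      rw [if_neg hα, h1, h2]; simp
  rw [show (fun α : Fin n → ℕ =>
      (∏ i, ((0:Fin n → ℂ)) i ^ α i) • a α
        + (∏ i, conj ((0:Fin n → ℂ) i) ^ α i) • star (b α))
      = fun α : Fin n → ℕ => if α = 0 then a 0 + star (b 0) else 0 from heq0] at hsum0
  have hf0 : f 0 = a 0 := by
    have := (hasSum_ite_eq (0 : Fin n → ℕ) (a 0 + star (b 0))).unique hsum0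
    rw [← this, hrep.2.1]; simp
  have ha0 : ‖a 0‖ ≤ supNormOn Ω f := by
    rw [← hf0]; exact le_csSup hbdd ⟨0, h0, rfl⟩
  have hterm : ∀ α ∈ F, (‖U (a α)‖ ^ p + ‖U (b α)‖ ^ p) * ‖∏ i, ((0:ℝ) • z) i ^ α i‖ ^ p
      = if α = 0 then ‖U (a 0)‖ ^ p + ‖U (b 0)‖ ^ p else 0 := by
    intro α _
    rw [hprod α]
    by_cases hα : α = 0
    · subst hα; simp [Real.one_rpow]
    · rw [if_neg hα, if_neg hα]
      simp [Real.zero_rpow (ne_of_gt hp0)]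
  rw [Finset.sum_congr rfl hterm, Finset.sum_ite_eq' F 0
    (fun _ => ‖U (a 0)‖ ^ p + ‖U (b 0)‖ ^ p)]
  have hbound : ‖U (a 0)‖ ^ p + ‖U (b 0)‖ ^ p ≤ lam ^ p * supNormOn Ω f ^ p := by
    rw [hrep.2.1]
    simp only [map_zero, norm_zero, Real.zero_rpow (ne_of_gt hp0), add_zero]
    rw [← Real.mul_rpow hlam (supNormOn_nonneg _ _)]
    refine Real.rpow_le_rpow (norm_nonneg _) ?_ (le_of_lt hp0)
    calc ‖U (a 0)‖ ≤ ‖U‖ * ‖a 0‖ := U.le_opNorm _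
      _ ≤ lam * supNormOn Ω f :=
        mul_le_mul hU ha0 (norm_nonneg _) hlam
  by_cases h0F : (0 : Fin n → ℕ) ∈ F
  · rw [if_pos h0F]; exact hbound
  · rw [if_neg h0F]
    exact mul_nonneg (Real.rpow_nonneg hlam p) (Real.rpow_nonneg (supNormOn_nonneg _ _) p)

end Helpers
/-- Lemma 3.6: the Bohr radius of the polydisc is a universal
lower bound for the Bohr radius of every bounded simply connected complete
Reinhardt domain. -/
theorem bohrR_ge_polydisc
    {H : Type*} [NormedAddCommGroup H] [InnerProductSpace ℂ H] [CompleteSpace H]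
    {Y : Type*} [NormedAddCommGroup Y] [NormedSpace ℂ Y]
    (U : (H →L[ℂ] H) →L[ℂ] Y) (p lam : ℝ) (hp : 1 ≤ p) (hU : ‖U‖ ≤ lam)
    (n : ℕ) (Ω : Set (Fin n → ℂ))
    (hΩ : IsCompleteReinhardt Ω) (hb : Bornology.IsBounded Ω)
    (hsc : SimplyConnectedSpace ↥Ω) :
    bohrR Ω p lam U ≥ bohrR (lqBall n ∞) p lam U := by
  classical
  have hlam : 0 ≤ lam := le_trans (norm_nonneg U) hU
  have hp0 : (0:ℝ) < p := lt_of_lt_of_le one_pos hp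
  -- coordinates of points of the polydisc
  have hcoord : ∀ {ζ : Fin n → ℂ}, ζ ∈ lqBall n ∞ → ∀ i, ‖ζ i‖ < 1 := by
    intro ζ hζ i
    simp only [lqBall, Set.mem_setOf_eq, lqNorm_top] at hζ
    exact lt_of_le_of_lt (le_ciSup (f := fun j => ‖ζ j‖) (Set.Finite.bddAbove (Set.finite_range _)) i) hζ
  have h0poly : (0 : Fin n → ℂ) ∈ lqBall n ∞ := by
    simp only [lqBall, Set.mem_setOf_eq, lqNorm_top]
    refine lt_of_le_of_lt (Real.iSup_le (fun i => ?_) le_rfl) one_pos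
    simp
  -- forward inclusion
  have hAB : {r : ℝ | 0 ≤ r ∧
      ∀ (f : (Fin n → ℂ) → H →L[ℂ] H) (a b : (Fin n → ℕ) → H →L[ℂ] H),
        IsPHRep (lqBall n ∞) f a b → BddAbove ((fun z => ‖f z‖) '' (lqBall n ∞)) →
        ∀ z ∈ lqBall n ∞, ∀ F : Finset (Fin n → ℕ),
          ∑ α ∈ F, (‖U (a α)‖ ^ p + ‖U (b α)‖ ^ p) * ‖∏ i, (r • z) i ^ α i‖ ^ p
            ≤ lam ^ p * supNormOn (lqBall n ∞) f ^ p} ⊆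
      {r : ℝ | 0 ≤ r ∧
      ∀ (f : (Fin n → ℂ) → H →L[ℂ] H) (a b : (Fin n → ℕ) → H →L[ℂ] H),
        IsPHRep Ω f a b → BddAbove ((fun z => ‖f z‖) '' Ω) →
        ∀ z ∈ Ω, ∀ F : Finset (Fin n → ℕ),
          ∑ α ∈ F, (‖U (a α)‖ ^ p + ‖U (b α)‖ ^ p) * ‖∏ i, (r • z) i ^ α i‖ ^ p
            ≤ lam ^ p * supNormOn Ω f ^ p} := by
    rintro r ⟨hr0, hr⟩
    refine ⟨hr0, ?_⟩
    intro f a b hrep hbdd z hz F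
    have hc : ∀ w ∈ lqBall n ∞, (fun i => z i * w i) ∈ Ω := by
      intro w hw
      refine hΩ.2.2.2 z hz _ fun j => ?_
      rw [norm_mul]
      exact mul_le_of_le_one_right (norm_nonneg _) (le_of_lt (hcoord hw j))
    have key : ∀ t : ℝ, |t| < 1 →
        ∑ α ∈ F, (‖U (a α)‖ ^ p + ‖U (b α)‖ ^ p) * ‖∏ i, ((r * t) • z) i ^ α i‖ ^ p
          ≤ lam ^ p * supNormOn Ω f ^ p := by
      intro t ht
      have hw : (fun _ : Fin n => (t:ℂ)) ∈ lqBall n ∞ := by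
        simp only [lqBall, Set.mem_setOf_eq, lqNorm_top]
        refine lt_of_le_of_lt (Real.iSup_le (fun i => ?_) (abs_nonneg t)) ht
        simp
      have hT := bohr_transfer U p lam hp hlam Ω (lqBall n ∞) z hc hr f a b hrep hbdd
        (fun _ : Fin n => (t:ℂ)) hw F
      refine le_trans (le_of_eq (Finset.sum_congr rfl fun α _ => ?_)) hT
      have hpe : (∏ i, ((r * t) • z) i ^ α i)
          = ∏ i, (z i * (r • fun _ : Fin n => (t:ℂ)) i) ^ α i := by
        refine Finset.prod_congr rfl fun i _ => ?_
        congr 1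
        simp only [Pi.smul_apply, Complex.real_smul]
        push_cast
        ring
      rw [hpe]
    have hcont : Filter.Tendsto
        (fun t : ℝ => ∑ α ∈ F,
          (‖U (a α)‖ ^ p + ‖U (b α)‖ ^ p) * ‖∏ i, ((r * t) • z) i ^ α i‖ ^ p)
        (nhdsWithin (1:ℝ) (Set.Iio 1))
        (nhds (∑ α ∈ F,
          (‖U (a α)‖ ^ p + ‖U (b α)‖ ^ p) * ‖∏ i, ((r * 1) • z) i ^ α i‖ ^ p)) := by
      refine (tendsto_finset_sum F fun α _ => ?_).mono_left nhdsWithin_le_nhds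
      have h1 : Continuous fun t : ℝ => ‖∏ i, ((r * t) • z) i ^ α i‖ := by
        refine Continuous.norm ?_
        refine continuous_finset_prod _ fun i _ => ?_
        exact (((continuous_const.mul continuous_id).smul continuous_const).pow _)
      have h2 : Filter.Tendsto (fun t : ℝ => ‖∏ i, ((r * t) • z) i ^ α i‖ ^ p)
          (nhds 1) (nhds (‖∏ i, ((r * 1) • z) i ^ α i‖ ^ p)) :=
        ((Real.continuousAt_rpow_const _ p (Or.inr (le_of_lt hp0))).comp
          h1.continuousAt)
      exact h2.const_mul _
    rw [mul_one] at hcont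
    refine le_of_tendsto hcont ?_
    filter_upwards [Ioo_mem_nhdsLT
      (neg_one_lt_zero.trans one_pos : (-1:ℝ) < 1)] with t ht
    exact key t (abs_lt.mpr ⟨ht.1, ht.2⟩)
  have h0A : (0:ℝ) ∈ {r : ℝ | 0 ≤ r ∧
      ∀ (f : (Fin n → ℂ) → H →L[ℂ] H) (a b : (Fin n → ℕ) → H →L[ℂ] H),
        IsPHRep (lqBall n ∞) f a b → BddAbove ((fun z => ‖f z‖) '' (lqBall n ∞)) →
        ∀ z ∈ lqBall n ∞, ∀ F : Finset (Fin n → ℕ),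
          ∑ α ∈ F, (‖U (a α)‖ ^ p + ‖U (b α)‖ ^ p) * ‖∏ i, (r • z) i ^ α i‖ ^ p
            ≤ lam ^ p * supNormOn (lqBall n ∞) f ^ p} := by
    refine ⟨le_rfl, ?_⟩
    intro f a b hrep hbdd z hz F
    exact bohr_zero_mem U p lam hp hU (lqBall n ∞) h0poly f a b hrep hbdd z hz F
  rw [ge_iff_le]
  unfold bohrR
  by_cases hBdd : BddAbove {r : ℝ | 0 ≤ r ∧
      ∀ (f : (Fin n → ℂ) → H →L[ℂ] H) (a b : (Fin n → ℕ) → H →L[ℂ] H),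
        IsPHRep Ω f a b → BddAbove ((fun z => ‖f z‖) '' Ω) →
        ∀ z ∈ Ω, ∀ F : Finset (Fin n → ℕ),
          ∑ α ∈ F, (‖U (a α)‖ ^ p + ‖U (b α)‖ ^ p) * ‖∏ i, (r • z) i ^ α i‖ ^ p
            ≤ lam ^ p * supNormOn Ω f ^ p}
  · exact csSup_le_csSup hBdd ⟨0, h0A⟩ hAB
  · -- the Ω-set is unbounded; show the polydisc set is unbounded too
    obtain ⟨ε, hε, hball⟩ := Metric.isOpen_iff.mp hΩ.1 0 hΩ.2.2.1
    obtain ⟨s₀, hs₀⟩ := hb.subset_closedBall 0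
    set s' : ℝ := max s₀ 0 + 1 with hs'def
    have hs'pos : 0 < s' := by positivity
    have hwbound : ∀ w ∈ Ω, ‖w‖ ≤ max s₀ 0 := by
      intro w hw
      have := hs₀ hw
      rw [Metric.mem_closedBall, dist_zero_right] at this
      exact le_max_of_le_left this
    have hεs : 0 < ε / s' := div_pos hε hs'pos
    have hc : ∀ w ∈ Ω, (fun i => ((s'⁻¹ : ℝ) : ℂ) * w i) ∈ lqBall n ∞ := by
      intro w hw
      simp only [lqBall, Set.mem_setOf_eq, lqNorm_top]
      have hbd : max s₀ 0 * s'⁻¹ < 1 := by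
        rw [← div_eq_mul_inv, div_lt_one hs'pos]
        simp [hs'def]
      refine lt_of_le_of_lt (Real.iSup_le (fun i => ?_) ?_) hbd
      · rw [norm_mul, Complex.norm_real, Real.norm_eq_abs,
          abs_of_nonneg (inv_nonneg.mpr (le_of_lt hs'pos)), mul_comm]
        exact mul_le_mul_of_nonneg_right
          ((norm_le_pi_norm w i).trans (hwbound w hw))
          (inv_nonneg.mpr (le_of_lt hs'pos))
      · positivity
    have hrev : ∀ r ∈ {r : ℝ | 0 ≤ r ∧
        ∀ (f : (Fin n → ℂ) → H →L[ℂ] H) (a b : (Fin n → ℕ) → H →L[ℂ] H),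
          IsPHRep Ω f a b → BddAbove ((fun z => ‖f z‖) '' Ω) →
          ∀ z ∈ Ω, ∀ F : Finset (Fin n → ℕ),
            ∑ α ∈ F, (‖U (a α)‖ ^ p + ‖U (b α)‖ ^ p) * ‖∏ i, (r • z) i ^ α i‖ ^ p
              ≤ lam ^ p * supNormOn Ω f ^ p},
        r * (ε / s') ∈ {r : ℝ | 0 ≤ r ∧
        ∀ (f : (Fin n → ℂ) → H →L[ℂ] H) (a b : (Fin n → ℕ) → H →L[ℂ] H),
          IsPHRep (lqBall n ∞) f a b → BddAbove ((fun z => ‖f z‖) '' (lqBall n ∞)) →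
          ∀ z ∈ lqBall n ∞, ∀ F : Finset (Fin n → ℕ),
            ∑ α ∈ F, (‖U (a α)‖ ^ p + ‖U (b α)‖ ^ p) * ‖∏ i, (r • z) i ^ α i‖ ^ p
              ≤ lam ^ p * supNormOn (lqBall n ∞) f ^ p} := by
      rintro r ⟨hr0, hr⟩
      refine ⟨mul_nonneg hr0 (le_of_lt hεs), ?_⟩
      intro f a b hrep hbdd ζ hζ F
      have hmem : ε • ζ ∈ Ω := by
        apply hball
        rw [Metric.mem_ball, dist_zero_right]
        rcases n.eq_zero_or_pos with hn | hn
        · subst hn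
          rw [Subsingleton.elim (ε • ζ) 0, norm_zero]; exact hε
        · rw [pi_norm_lt_iff hε]
          intro i
          rw [Pi.smul_apply, norm_smul, Real.norm_eq_abs, abs_of_pos hε]
          exact mul_lt_of_lt_one_right hε (hcoord hζ i)
      have hT := bohr_transfer U p lam hp hlam (lqBall n ∞) Ω
        (fun _ : Fin n => ((s'⁻¹ : ℝ) : ℂ)) hc hr f a b hrep hbdd (ε • ζ) hmem F
      refine le_trans (le_of_eq (Finset.sum_congr rfl fun α _ => ?_)) hT
      have hpe : (∏ i, ((r * (ε / s')) • ζ) i ^ α i)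
          = ∏ i, (((s'⁻¹ : ℝ) : ℂ) * (r • ε • ζ) i) ^ α i := by
        refine Finset.prod_congr rfl fun i _ => ?_
        congr 1
        simp only [Pi.smul_apply, Complex.real_smul]
        push_cast
        field_simp
      rw [hpe]
    rw [Real.sSup_of_not_bddAbove hBdd, Real.sSup_of_not_bddAbove ?_]
    intro hA
    apply hBdd
    obtain ⟨M, hM⟩ := hA
    refine ⟨M * (s' / ε), fun r hrB => ?_⟩
    have := hM (hrev r hrB)
    calc r = (r * (ε / s')) * (s' / ε) := by field_simp
      _ ≤ M * (s' / ε) :=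
        mul_le_mul_of_nonneg_right this (le_of_lt (div_pos hs'pos hε))
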